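/- Let β, α be the arcsine and semicircle laws on [−2,2], and (𝒰f)(x) = ∫ (f(x)−f(y))/(x−y) β(dy). Then for every C² function f on [−2,2] and x ∈ (−2,2), (𝒩f)(x) = −√(4−x²)·d/dx[√(4−x²)·(𝒰f)(x)], where (𝒩f)(x) = ∫ yf'(y)β(dy) + x∫ f'(y)β(dy) − (4−x²)∫ (f'(x)−f'(y))/(x−y) β(dy). -/

import Mathlib

open MeasureTheory Real Set
open scoped NNReal ENNReal

/-- The arcsine law on `[-2,2]`. -/
noncomputable def arcsineLaw : Measure ℝ :=
  (volume.restrict (Set.Icc (-2 : ℝ) 2)).withDensity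
    fun y => ENNReal.ofReal (1 / (π * Real.sqrt (4 - y ^ 2)))

/-- The operator `𝒰f(x) = ∫ (f(x) - f(y))/(x - y) β(dy)`. -/
noncomputable def calU (f : ℝ → ℝ) (x : ℝ) : ℝ :=
  ∫ y, (f x - f y) / (x - y) ∂arcsineLaw

/-- The counting-number operator
`𝒩f(x) = ∫ y f'(y) β(dy) + x ∫ f'(y) β(dy) - (4-x²) ∫ (f'(x)-f'(y))/(x-y) β(dy)`. -/
noncomputable def calN (f : ℝ → ℝ) (x : ℝ) : ℝ :=
  (∫ y, y * deriv f y ∂arcsineLaw) + x * (∫ y, deriv f y ∂arcsineLaw) -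
    (4 - x ^ 2) * ∫ y, (deriv f x - deriv f y) / (x - y) ∂arcsineLaw



noncomputable def dq (f : ℝ → ℝ) (x y : ℝ) : ℝ :=
  if y = x then deriv f x else (f x - f y) / (x - y)

lemma dq_symm (f : ℝ → ℝ) (x y : ℝ) : dq f x y = dq f y x := by
  unfold dq
  rcases eq_or_ne y x with h | h
  · simp [h]
  · rw [if_neg h, if_neg (Ne.symm h)]
    rw [div_eq_div_iff (sub_ne_zero.2 (Ne.symm h)) (sub_ne_zero.2 h)]
    ring

lemma dq_of_ne (f : ℝ → ℝ) {x y : ℝ} (h : y ≠ x) : dq f x y = (f x - f y) / (x - y) :=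
  if_neg h

lemma dq_diag (f : ℝ → ℝ) (x : ℝ) : dq f x x = deriv f x := if_pos rfl

lemma hasDerivAt_dq_offdiag {f : ℝ → ℝ} (hfd : Differentiable ℝ f) {x y : ℝ} (h : y ≠ x) :
    HasDerivAt (fun z => dq f x z) ((deriv f y - dq f x y) / (y - x)) y := by
  have hne : x - y ≠ 0 := sub_ne_zero.2 (Ne.symm h)
  have h1 : HasDerivAt (fun z => (f x - f z) / (x - z))
      ((-(deriv f y) * (x - y) - (f x - f y) * (-1)) / (x - y) ^ 2) y := by
    exact (((hfd y).hasDerivAt.const_sub (f x)).div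
      ((hasDerivAt_id y).const_sub x) hne)
  have heq : (fun z => dq f x z) =ᶠ[nhds y] (fun z => (f x - f z) / (x - z)) := by
    filter_upwards [isOpen_ne.mem_nhds h] with z hz
    simp [dq, hz]
  refine (h1.congr_of_eventuallyEq heq).congr_deriv ?_
  have hne' : y - x ≠ 0 := sub_ne_zero.2 h
  rw [dq, if_neg h]
  rw [div_eq_div_iff (pow_ne_zero 2 hne) hne']
  field_simp
  ring

lemma taylor2 {f : ℝ → ℝ} (hf : ContDiff ℝ 2 f) {x y : ℝ} (hxy : x < y) :
    ∃ ξ ∈ Ioo x y, f y - f x - deriv f x * (y - x) = deriv (deriv f) ξ * (y - x) ^ 2 / 2 := by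
  have hf1 : ContDiff ℝ 1 f := hf.of_le one_le_two
  have hdf : Differentiable ℝ f := hf1.differentiable one_ne_zero
  have hdf' : Differentiable ℝ (deriv f) := by
    have h2 : ContDiff ℝ (1+1 : ℕ) f := hf
    rw [show ((1+1:ℕ):WithTop ℕ∞) = (1:WithTop ℕ∞)+1 by norm_cast] at h2
    exact ((contDiff_succ_iff_deriv.mp h2).2.2).differentiable one_ne_zero
  have hu : UniqueDiffOn ℝ (Icc x y) := uniqueDiffOn_Icc hxy
  have heq1 : ∀ z ∈ Icc x y, iteratedDerivWithin 1 f (Icc x y) z = deriv f z := by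
    intro z hz
    rw [iteratedDerivWithin_one]
    exact (hdf z).derivWithin (hu z hz)
  obtain ⟨ξ, hξ, hrem⟩ := taylor_mean_remainder_lagrange (n := 1) (x₀ := x) (x := y) hxy.ne
    (by rw [uIcc_of_le hxy.le]; exact hf.contDiffOn.of_le one_le_two)
    (by
      rw [uIcc_of_le hxy.le, uIoo_of_lt hxy]
      refine (hdf'.differentiableOn (s := Ioo x y)).congr ?_
      intro z hz
      exact heq1 z (Ioo_subset_Icc_self hz))
  rw [uIcc_of_le hxy.le] at hrem
  rw [uIoo_of_lt hxy] at hξ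
  refine ⟨ξ, hξ, ?_⟩
  have h2 : iteratedDerivWithin 2 f (Icc x y) ξ = deriv (deriv f) ξ := by
    have hmem : Icc x y ∈ nhds ξ := Icc_mem_nhds hξ.1 hξ.2
    rw [show (2:ℕ) = 1 + 1 from rfl, iteratedDerivWithin_succ,
      derivWithin_congr heq1 (heq1 ξ (Ioo_subset_Icc_self hξ)),
      derivWithin_of_mem_nhds hmem]
  rw [taylor_within_apply] at hrem
  simp only [Finset.sum_range_succ, Finset.sum_range_zero] at hrem
  rw [h2] at hrem
  rw [iteratedDerivWithin_zero] at hrem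
  rw [iteratedDerivWithin_one] at hrem
  rw [(hdf x).derivWithin (hu x (left_mem_Icc.2 hxy.le))] at hrem
  norm_num at hrem
  linarith [hrem]

lemma deriv2_cont {f : ℝ → ℝ} (hf : ContDiff ℝ 2 f) : Continuous (deriv (deriv f)) := by
  have h2 : ContDiff ℝ (1+1 : ℕ) f := hf
  rw [show ((1+1:ℕ):WithTop ℕ∞) = (1:WithTop ℕ∞)+1 by norm_cast] at h2
  exact ((contDiff_succ_iff_deriv.mp h2).2.2).continuous_deriv le_rfl

lemma diff_deriv {f : ℝ → ℝ} (hf : ContDiff ℝ 2 f) : Differentiable ℝ (deriv f) := by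
  have h2 : ContDiff ℝ (1+1 : ℕ) f := hf
  rw [show ((1+1:ℕ):WithTop ℕ∞) = (1:WithTop ℕ∞)+1 by norm_cast] at h2
  exact ((contDiff_succ_iff_deriv.mp h2).2.2).differentiable one_ne_zero

/-- Mean value form of the difference quotient. -/
lemma dq_eq_deriv {f : ℝ → ℝ} (hfd : Differentiable ℝ f) {x y : ℝ} (h : y ≠ x) :
    ∃ ξ ∈ Ioo (min x y) (max x y), dq f x y = deriv f ξ := by
  rcases h.lt_or_gt with hlt | hlt
  · obtain ⟨ξ, hξ, hs⟩ := exists_hasDerivAt_eq_slope f (deriv f) hlt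
      (hfd.continuous.continuousOn) (fun z _ => (hfd z).hasDerivAt)
    refine ⟨ξ, by rwa [min_eq_right hlt.le, max_eq_left hlt.le], ?_⟩
    rw [dq, if_neg h, hs]
  · obtain ⟨ξ, hξ, hs⟩ := exists_hasDerivAt_eq_slope f (deriv f) hlt
      (hfd.continuous.continuousOn) (fun z _ => (hfd z).hasDerivAt)
    refine ⟨ξ, by rwa [min_eq_left hlt.le, max_eq_right hlt.le], ?_⟩
    rw [dq, if_neg h, hs]
    rw [div_eq_div_iff (sub_ne_zero.2 (Ne.symm h)) (sub_ne_zero.2 hlt.ne')]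
    ring

lemma hasDerivAt_dq_diag {f : ℝ → ℝ} (hf : ContDiff ℝ 2 f) (x : ℝ) :
    HasDerivAt (fun y => dq f x y) (deriv (deriv f) x / 2) x := by
  have hdf : Differentiable ℝ f := (hf.of_le one_le_two).differentiable one_ne_zero
  have hdf' : Differentiable ℝ (deriv f) := diff_deriv hf
  have hc : Continuous (deriv (deriv f)) := deriv2_cont hf
  rw [hasDerivAt_iff_tendsto_slope]
  rw [Metric.tendsto_nhdsWithin_nhds]
  intro ε hε
  obtain ⟨δ, hδ, hcont⟩ := Metric.continuousAt_iff.mp (hc.continuousAt (x := x)) (ε/2) (by linarith)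
  refine ⟨δ, hδ, ?_⟩
  intro y hy hyd
  have hyx : y ≠ x := hy
  have hne : (y - x) ≠ 0 := sub_ne_zero.2 hyx
  have hslope : slope (dq f x) x y = (f y - f x - deriv f x * (y - x)) / (y - x) ^ 2 := by
    rw [slope_def_field, dq, dq, if_neg hyx, if_pos rfl]
    have hne' : x - y ≠ 0 := sub_ne_zero.2 (Ne.symm hyx)
    field_simp
    ring
  have key : |slope (dq f x) x y - deriv (deriv f) x / 2| ≤ (3/2) * (ε/2) := by
    rcases hyx.lt_or_gt with hlt | hlt
    · -- y < x : expand at y, plus MVT for deriv f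
      obtain ⟨ξ, hξ, hrem⟩ := taylor2 hf hlt
      obtain ⟨η, hη, hsl⟩ := exists_hasDerivAt_eq_slope (deriv f) (deriv (deriv f)) hlt
        (hdf'.continuous.continuousOn) (fun z _ => (hdf' z).hasDerivAt)
      have h1 : deriv f x - deriv f y = deriv (deriv f) η * (x - y) := by
        rw [hsl, div_mul_cancel₀ _ (sub_ne_zero.2 hlt.ne')]
      have hsv : slope (dq f x) x y = deriv (deriv f) η - deriv (deriv f) ξ / 2 := by
        rw [hslope]
        rw [div_eq_iff (pow_ne_zero 2 hne)]
        nlinarith [hrem, h1]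
      have hξx : |ξ - x| < δ := by
        rw [abs_sub_lt_iff]
        rw [Real.dist_eq, abs_sub_lt_iff] at hyd
        constructor <;> cases' hξ with h1 h2 <;> linarith [hyd.1, hyd.2]
      have hηx : |η - x| < δ := by
        rw [abs_sub_lt_iff]
        rw [Real.dist_eq, abs_sub_lt_iff] at hyd
        constructor <;> cases' hη with h1 h2 <;> linarith [hyd.1, hyd.2]
      have e1 := abs_lt.mp (show |deriv (deriv f) ξ - deriv (deriv f) x| < ε/2 by
        have := hcont (x := ξ) (by rwa [Real.dist_eq]); rwa [Real.dist_eq] at this)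
      have e2 := abs_lt.mp (show |deriv (deriv f) η - deriv (deriv f) x| < ε/2 by
        have := hcont (x := η) (by rwa [Real.dist_eq]); rwa [Real.dist_eq] at this)
      rw [hsv, abs_le]
      constructor <;> linarith
    · -- x < y : direct Taylor at x
      obtain ⟨ξ, hξ, hrem⟩ := taylor2 hf hlt
      have hsv : slope (dq f x) x y = deriv (deriv f) ξ / 2 := by
        rw [hslope, hrem]
        field_simp
      have hξx : |ξ - x| < δ := by
        rw [abs_sub_lt_iff]
        rw [Real.dist_eq, abs_sub_lt_iff] at hyd
        constructor <;> cases' hξ with h1 h2 <;> linarith [hyd.1, hyd.2]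
      have e1 := abs_lt.mp (show |deriv (deriv f) ξ - deriv (deriv f) x| < ε/2 by
        have := hcont (x := ξ) (by rwa [Real.dist_eq]); rwa [Real.dist_eq] at this)
      rw [hsv, abs_le]
      constructor <;> linarith
  rw [Real.dist_eq]
  linarith

noncomputable def dq' (f : ℝ → ℝ) (x y : ℝ) : ℝ :=
  if y = x then deriv (deriv f) x / 2 else (deriv f y - dq f x y) / (y - x)

lemma dq'_of_ne (f : ℝ → ℝ) {x y : ℝ} (h : y ≠ x) :
    dq' f x y = (deriv f y - dq f x y) / (y - x) := if_neg h

lemma dq'_diag (f : ℝ → ℝ) (x : ℝ) : dq' f x x = deriv (deriv f) x / 2 := if_pos rfl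

lemma hasDerivAt_dq {f : ℝ → ℝ} (hf : ContDiff ℝ 2 f) (x y : ℝ) :
    HasDerivAt (fun z => dq f x z) (dq' f x y) y := by
  rcases eq_or_ne y x with h | h
  · rw [dq', if_pos h, h]
    exact hasDerivAt_dq_diag hf x
  · rw [dq', if_neg h]
    exact hasDerivAt_dq_offdiag ((hf.of_le one_le_two).differentiable one_ne_zero) h

lemma continuous_dq {f : ℝ → ℝ} (hf : ContDiff ℝ 2 f) (x : ℝ) :
    Continuous (fun y => dq f x y) :=
  continuous_iff_continuousAt.2 fun y => (hasDerivAt_dq hf x y).continuousAt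

lemma abs_dq_le {f : ℝ → ℝ} (hfd : Differentiable ℝ f) {C : ℝ}
    (hC : ∀ z ∈ Icc (-4:ℝ) 4, |deriv f z| ≤ C) {x y : ℝ}
    (hx : x ∈ Icc (-4:ℝ) 4) (hy : y ∈ Icc (-4:ℝ) 4) : |dq f x y| ≤ C := by
  rcases eq_or_ne y x with h | h
  · rw [dq, if_pos h]; exact hC x hx
  · obtain ⟨ξ, hξ, hs⟩ := dq_eq_deriv hfd h
    rw [hs]
    refine hC ξ ⟨?_, ?_⟩
    · exact le_trans (le_min hx.1 hy.1) hξ.1.le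
    · exact le_trans hξ.2.le (max_le hx.2 hy.2)

lemma abs_dq'_le {f : ℝ → ℝ} (hf : ContDiff ℝ 2 f) {C : ℝ}
    (hC : ∀ z ∈ Icc (-4:ℝ) 4, |deriv (deriv f) z| ≤ C) {x y : ℝ}
    (hx : x ∈ Icc (-4:ℝ) 4) (hy : y ∈ Icc (-4:ℝ) 4) : |dq' f x y| ≤ C := by
  have hC0 : 0 ≤ C := le_trans (abs_nonneg _) (hC 0 (by norm_num))
  have hdf : Differentiable ℝ f := (hf.of_le one_le_two).differentiable one_ne_zero
  rcases eq_or_ne y x with h | h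
  · rw [dq', if_pos h, abs_div]
    rw [abs_of_nonneg (by norm_num : (0:ℝ) ≤ 2)]
    have := hC x hx
    subst h
    linarith
  · rw [dq', if_neg h]
    obtain ⟨ξ, hξ, hs⟩ := dq_eq_deriv hdf h
    have hξm : ξ ∈ Icc (-4:ℝ) 4 :=
      ⟨le_trans (le_min hx.1 hy.1) hξ.1.le, le_trans hξ.2.le (max_le hx.2 hy.2)⟩
    rw [hs]
    have hdf' : Differentiable ℝ (deriv f) := diff_deriv hf
    have h2 : deriv f y - deriv f ξ = dq (deriv f) ξ y * (y - ξ) := by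
      rcases eq_or_ne y ξ with hev | hev
      · simp [hev]
      · rw [dq, if_neg hev, div_mul_eq_mul_div, eq_div_iff (sub_ne_zero.2 (Ne.symm hev))]
        ring
    have h3 : |y - ξ| ≤ |y - x| := by
      rcases h.lt_or_gt with hlt | hlt
      · rw [min_eq_right hlt.le, max_eq_left hlt.le] at hξ
        rw [abs_of_nonpos (by linarith [hξ.1.le, hξ.2.le] : y - ξ ≤ 0),
          abs_of_nonpos (by linarith : y - x ≤ 0)]
        linarith [hξ.2.le]
      · rw [min_eq_left hlt.le, max_eq_right hlt.le] at hξ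
        rw [abs_of_nonneg (by linarith [hξ.1.le, hξ.2.le] : 0 ≤ y - ξ),
          abs_of_nonneg (by linarith : 0 ≤ y - x)]
        linarith [hξ.1.le]
    have h4 : |dq (deriv f) ξ y| ≤ C := abs_dq_le hdf' hC hξm hy
    rw [abs_div, div_le_iff₀ (abs_pos.2 (sub_ne_zero.2 h))]
    calc |deriv f y - deriv f ξ| = |dq (deriv f) ξ y| * |y - ξ| := by rw [h2, abs_mul]
      _ ≤ C * |y - ξ| := mul_le_mul_of_nonneg_right h4 (abs_nonneg _)
      _ ≤ C * |y - x| := mul_le_mul_of_nonneg_left h3 hC0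



noncomputable def wfn (y : ℝ) : ℝ := 1 / (π * Real.sqrt (4 - y ^ 2))

lemma wfn_nonneg (y : ℝ) : 0 ≤ wfn y :=
  one_div_nonneg.2 (mul_nonneg pi_pos.le (Real.sqrt_nonneg _))

lemma measurable_wfn : Measurable wfn :=
  (measurable_const.div ((measurable_const.mul
    ((measurable_const.sub (measurable_id.pow_const 2)).sqrt))))

lemma integrableOn_wfn : IntegrableOn wfn (Ioc (-2:ℝ) 2) := by
  refine intervalIntegral.integrableOn_deriv_of_nonneg (g := fun z => (1/π) * Real.arcsin (z/2))
    (Continuous.continuousOn (by continuity)) ?_ (fun y hy => wfn_nonneg y)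
  intro y hy
  have h4 : (0:ℝ) < 4 - y ^ 2 := by nlinarith [hy.1, hy.2]
  have hs : Real.sqrt (1 - (y/2) ^ 2) = Real.sqrt (4 - y ^ 2) / 2 := by
    rw [show (1 - (y/2)^2) = (4 - y^2) / 4 by ring]
    rw [Real.sqrt_div (by linarith) 4, show Real.sqrt 4 = 2 by
      rw [show (4:ℝ) = 2^2 by norm_num, Real.sqrt_sq (by norm_num : (0:ℝ) ≤ 2)]]
  have h1 : HasDerivAt (fun z : ℝ => Real.arcsin (z/2)) (1 / Real.sqrt (1 - (y/2)^2) * (1/2)) y := by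
    have := (Real.hasDerivAt_arcsin (by intro h; nlinarith [hy.1] : y/2 ≠ -1)
      (by intro h; nlinarith [hy.2] : y/2 ≠ 1)).comp y ((hasDerivAt_id y).div_const 2)
    exact this
  have h2 := h1.const_mul (1/π)
  refine h2.congr_deriv ?_
  rw [hs]
  have hπ : π ≠ 0 := pi_ne_zero
  have hsq : Real.sqrt (4 - y^2) ≠ 0 := by positivity
  rw [wfn]
  field_simp



lemma arcsineLaw_eq : arcsineLaw =
    (volume.restrict (Set.Icc (-2 : ℝ) 2)).withDensity
      fun y => ((Real.toNNReal (wfn y) : ℝ≥0) : ℝ≥0∞) := rfl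

lemma measurable_wfn_nnreal : Measurable (fun y => Real.toNNReal (wfn y)) :=
  measurable_real_toNNReal.comp measurable_wfn

lemma integral_arcsine (φ : ℝ → ℝ) :
    ∫ y, φ y ∂arcsineLaw = ∫ y in Ioo (-2:ℝ) 2, wfn y * φ y := by
  rw [arcsineLaw_eq, integral_withDensity_eq_integral_smul measurable_wfn_nnreal]
  rw [← integral_Icc_eq_integral_Ioo]
  congr 1
  ext y
  rw [NNReal.smul_def, smul_eq_mul, Real.coe_toNNReal _ (wfn_nonneg y)]

lemma ae_arcsine (p : ℝ → Prop) (hp : ∀ᵐ y ∂(volume.restrict (Icc (-2:ℝ) 2)), p y) :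
    ∀ᵐ y ∂arcsineLaw, p y :=
  (withDensity_absolutelyContinuous _ _).ae_le hp

lemma ae_restrict_Ioo : ∀ᵐ y ∂(volume.restrict (Icc (-2:ℝ) 2)), y ∈ Ioo (-2:ℝ) 2 := by
  have h0 : (volume.restrict (Icc (-2:ℝ) 2)) {y | ¬ y ∈ Ioo (-2:ℝ) 2} = 0 := by
    rw [show {y | ¬ y ∈ Ioo (-2:ℝ) 2} = (Ioo (-2:ℝ) 2)ᶜ from rfl,
      Measure.restrict_apply measurableSet_Ioo.compl]
    refine measure_mono_null (fun y hy => ?_)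
      ((Set.toFinite ({-2, 2} : Set ℝ)).measure_zero volume)
    rcases hy with ⟨h1, h2⟩
    simp only [mem_compl_iff, mem_Ioo, not_and_or, not_lt] at h1
    rcases h1 with h | h
    · exact Or.inl (le_antisymm h h2.1)
    · exact Or.inr (le_antisymm h2.2 h)
  exact (ae_iff).2 h0

lemma ae_arcsine_Ioo : ∀ᵐ y ∂arcsineLaw, y ∈ Ioo (-2:ℝ) 2 :=
  ae_arcsine _ ae_restrict_Ioo

lemma arcsineLaw_singleton (x : ℝ) : arcsineLaw {x} = 0 := by
  refine (withDensity_absolutelyContinuous _ _) ?_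
  exact le_antisymm (le_trans (Measure.restrict_apply_le _ _) (by simp)) zero_le

lemma ae_ne (x : ℝ) : ∀ᵐ y ∂arcsineLaw, y ≠ x := by
  rw [ae_iff]
  convert arcsineLaw_singleton x using 2
  ext y; simp

lemma integrable_arcsine_of_bound (φ : ℝ → ℝ) (C : ℝ)
    (hm : AEStronglyMeasurable φ (volume.restrict (Icc (-2:ℝ) 2)))
    (hb : ∀ y ∈ Ioo (-2:ℝ) 2, |φ y| ≤ C) : Integrable φ arcsineLaw := by
  rw [arcsineLaw_eq, integrable_withDensity_iff_integrable_smul measurable_wfn_nnreal]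
  have heq : (fun y => (Real.toNNReal (wfn y) : ℝ≥0) • φ y) = fun y => wfn y * φ y := by
    ext y; rw [NNReal.smul_def, smul_eq_mul, Real.coe_toNNReal _ (wfn_nonneg y)]
  rw [heq]
  have hwint : Integrable wfn (volume.restrict (Icc (-2:ℝ) 2)) := by
    rw [show Integrable wfn (volume.restrict (Icc (-2:ℝ) 2)) = IntegrableOn wfn (Icc (-2:ℝ) 2) volume from rfl,
      integrableOn_Icc_iff_integrableOn_Ioo]
    exact integrableOn_wfn.mono_set Ioo_subset_Ioc_self
  refine Integrable.mono' (hwint.const_mul C) (measurable_wfn.aestronglyMeasurable.mul hm) ?_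
  filter_upwards [ae_restrict_Ioo] with y hy
  rw [Real.norm_eq_abs, abs_mul, abs_of_nonneg (wfn_nonneg y)]
  calc wfn y * |φ y| ≤ wfn y * C := mul_le_mul_of_nonneg_left (hb y hy) (wfn_nonneg y)
    _ = C * wfn y := mul_comm _ _


/-- For a `C²` function `f` and `x ∈ (-2,2)`,
`(𝒩f)(x) = -√(4-x²) · d/dx [√(4-x²) (𝒰f)(x)]`. -/
theorem calN_eq_deriv_calU (f : ℝ → ℝ) (hf : ContDiff ℝ 2 f) (x : ℝ)
    (hx : x ∈ Set.Ioo (-2 : ℝ) 2) :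
    calN f x =
      -Real.sqrt (4 - x ^ 2) *
        deriv (fun t => Real.sqrt (4 - t ^ 2) * calU f t) x := by
  have hdf : Differentiable ℝ f := (hf.of_le one_le_two).differentiable one_ne_zero
  have hdf' : Differentiable ℝ (deriv f) := diff_deriv hf
  have hcd : Continuous (deriv f) := hf.continuous_deriv one_le_two
  have hcd2 : Continuous (deriv (deriv f)) := deriv2_cont hf
  obtain ⟨C1, hC1⟩ := isCompact_Icc.exists_bound_of_continuousOn
    (s := Icc (-4:ℝ) 4) hcd.continuousOn
  obtain ⟨C2, hC2⟩ := isCompact_Icc.exists_bound_of_continuousOn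
    (s := Icc (-4:ℝ) 4) hcd2.continuousOn
  simp only [Real.norm_eq_abs] at hC1 hC2
  have hC1' : 0 ≤ C1 := le_trans (abs_nonneg _) (hC1 0 (by norm_num))
  have hC2' : 0 ≤ C2 := le_trans (abs_nonneg _) (hC2 0 (by norm_num))
  have hx4 : x ∈ Icc (-4:ℝ) 4 := ⟨by linarith [hx.1], by linarith [hx.2]⟩
  have hsub : Icc (-2:ℝ) 2 ⊆ Icc (-4:ℝ) 4 := Icc_subset_Icc (by norm_num) (by norm_num)
  have h4x : (0:ℝ) < 4 - x ^ 2 := by nlinarith [hx.1, hx.2]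
  have hsx : Real.sqrt (4 - x ^ 2) ≠ 0 := by positivity
  -- the integrals
  set V : ℝ := ∫ y, dq f x y ∂arcsineLaw with hV
  set D : ℝ := ∫ y, dq' f y x ∂arcsineLaw with hD
  -- calU agrees with the dq-integral
  have hUV : ∀ t, calU f t = ∫ y, dq f t y ∂arcsineLaw := by
    intro t
    rw [calU]
    refine integral_congr_ae ?_
    filter_upwards [ae_ne t] with y hy
    rw [dq, if_neg hy]
  -- measurability of the dq' integrand
  have hmeasD : Measurable (fun y => dq' f y x) := by
    have h1 : (fun y => dq' f y x) = fun y =>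
        if x = y then deriv (deriv f) y / 2 else (deriv f x - dq f x y) / (x - y) := by
      ext y
      rcases eq_or_ne x y with h | h
      · subst h; simp [dq']
      · simp only [dq', if_neg (Ne.symm h), if_neg h, dq_symm f y x]
    rw [h1]
    refine Measurable.ite ?_ (hcd2.measurable.div_const 2) ?_
    · have : {y : ℝ | x = y} = {x} := by ext y; simp [eq_comm]
      rw [this]; exact measurableSet_singleton x
    · exact (measurable_const.sub (continuous_dq hf x).measurable).div
        (measurable_const.sub measurable_id)
  -- differentiation under the integral sign
  have key := hasDerivAt_integral_of_dominated_loc_of_deriv_le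
    (μ := arcsineLaw) (x₀ := x) (F := fun t y => dq f t y) (F' := fun t y => dq' f y t)
    (bound := fun _ => C2) (s := Metric.ball x 1) (Metric.ball_mem_nhds x one_pos)
    (Filter.Eventually.of_forall fun t => (continuous_dq hf t).aestronglyMeasurable)
    (integrable_arcsine_of_bound _ C1 (continuous_dq hf x).aestronglyMeasurable.restrict
      (fun y hy => abs_dq_le hdf hC1 hx4 (hsub (Ioo_subset_Icc_self hy))))
    hmeasD.aestronglyMeasurable
    (by
      filter_upwards [ae_arcsine_Ioo] with y hy t ht
      have ht4 : t ∈ Icc (-4:ℝ) 4 := by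
        rw [Metric.mem_ball, Real.dist_eq, abs_sub_lt_iff] at ht
        exact ⟨by linarith [hx.1], by linarith [hx.2]⟩
      rw [Real.norm_eq_abs]
      exact abs_dq'_le hf hC2 (hsub (Ioo_subset_Icc_self hy)) ht4)
    (integrable_arcsine_of_bound _ C2 aestronglyMeasurable_const
      (fun y _ => by rw [abs_of_nonneg hC2']))
    (by
      refine Filter.Eventually.of_forall fun y => fun t _ => ?_
      have : (fun t => dq f t y) = fun t => dq f y t := funext fun t => dq_symm f t y
      rw [this]
      exact hasDerivAt_dq hf y t)
  obtain ⟨hDint, hderivV⟩ := key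
  -- derivative of the square root factor
  have hsqrt : HasDerivAt (fun t : ℝ => Real.sqrt (4 - t ^ 2))
      (-x / Real.sqrt (4 - x ^ 2)) x := by
    have hinner : HasDerivAt (fun t : ℝ => 4 - t ^ 2) (-(2 * x)) x := by
      simpa using ((hasDerivAt_pow 2 x).const_sub 4)
    have := (Real.hasDerivAt_sqrt (ne_of_gt h4x)).comp x hinner
    refine this.congr_deriv ?_
    ring
  -- derivative of the product
  have hprod : HasDerivAt (fun t => Real.sqrt (4 - t ^ 2) * calU f t)
      ((-x / Real.sqrt (4 - x ^ 2)) * V + Real.sqrt (4 - x ^ 2) * D) x := by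
    have hre : (fun t => Real.sqrt (4 - t ^ 2) * calU f t)
        = fun t => Real.sqrt (4 - t ^ 2) * ∫ y, dq f t y ∂arcsineLaw :=
      funext fun t => by rw [hUV]
    rw [hre]
    exact hsqrt.mul hderivV
  -- integrability facts
  have hI1int : Integrable (fun y => y * deriv f y) arcsineLaw := by
    refine integrable_arcsine_of_bound _ (4 * C1)
      ((measurable_id.mul hcd.measurable).aestronglyMeasurable) (fun y hy => ?_)
    rw [abs_mul]
    have h1 : |y| ≤ 4 := by rw [abs_le]; constructor <;> [linarith [hy.1]; linarith [hy.2]]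
    exact mul_le_mul h1 (hC1 y (hsub (Ioo_subset_Icc_self hy))) (abs_nonneg _) (by norm_num)
  have hI2int : Integrable (fun y => deriv f y) arcsineLaw :=
    integrable_arcsine_of_bound _ C1 hcd.aestronglyMeasurable.restrict
      (fun y hy => hC1 y (hsub (Ioo_subset_Icc_self hy)))
  have hI3int : Integrable (fun y => (deriv f x - deriv f y) / (x - y)) arcsineLaw := by
    refine integrable_arcsine_of_bound _ C2
      (((measurable_const.sub hcd.measurable).div
        (measurable_const.sub measurable_id)).aestronglyMeasurable) (fun y hy => ?_)
    rcases eq_or_ne y x with h | h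
    · subst h; simp [hC2']
    · have : (deriv f x - deriv f y) / (x - y) = dq (deriv f) x y := by
        rw [dq, if_neg h]
      rw [this]
      exact abs_dq_le hdf' hC2 hx4 (hsub (Ioo_subset_Icc_self hy))
  have hVint : Integrable (fun y => dq f x y) arcsineLaw :=
    integrable_arcsine_of_bound _ C1 (continuous_dq hf x).aestronglyMeasurable.restrict
      (fun y hy => abs_dq_le hdf hC1 hx4 (hsub (Ioo_subset_Icc_self hy)))
  have hmeasD' : Measurable (fun y => dq' f x y) := by
    refine Measurable.ite ?_ measurable_const ?_
    · have : {y : ℝ | y = x} = {x} := by ext y; simp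
      rw [this]; exact measurableSet_singleton x
    · exact (hcd.measurable.sub (continuous_dq hf x).measurable).div
        (measurable_id.sub measurable_const)
  have hD'int : Integrable (fun y => dq' f x y) arcsineLaw :=
    integrable_arcsine_of_bound _ C2 hmeasD'.aestronglyMeasurable
      (fun y hy => abs_dq'_le hf hC2 hx4 (hsub (Ioo_subset_Icc_self hy)))
  -- the integration-by-parts identity : ∫ G dβ = 0
  set G : ℝ → ℝ := fun y =>
    x * dq f x y + (4 - x ^ 2) * dq' f x y - (x + y) * deriv f y with hG
  have hGbound : ∀ y ∈ Icc (-2:ℝ) 2, |G y| ≤ 2 * C1 + 4 * C2 + 4 * C1 := by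
    intro y hy
    have hy4 : y ∈ Icc (-4:ℝ) 4 := hsub hy
    have b1 : |dq f x y| ≤ C1 := abs_dq_le hdf hC1 hx4 hy4
    have b2 : |dq' f x y| ≤ C2 := abs_dq'_le hf hC2 hx4 hy4
    have b3 : |deriv f y| ≤ C1 := hC1 y hy4
    have hxa : |x| ≤ 2 := by rw [abs_le]; exact ⟨hx.1.le, hx.2.le⟩
    have hya : |y| ≤ 2 := by rw [abs_le]; exact ⟨hy.1, hy.2⟩
    calc |G y| ≤ |x * dq f x y| + |(4 - x ^ 2) * dq' f x y| + |(x + y) * deriv f y| := by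
          rw [hG]
          exact (abs_sub _ _).trans (add_le_add_left (abs_add_le _ _) _)
      _ ≤ 2 * C1 + 4 * C2 + 4 * C1 := by
          rw [abs_mul, abs_mul, abs_mul]
          have e1 : |x| * |dq f x y| ≤ 2 * C1 :=
            mul_le_mul hxa b1 (abs_nonneg _) (by norm_num)
          have e2 : |4 - x ^ 2| * |dq' f x y| ≤ 4 * C2 := by
            refine mul_le_mul ?_ b2 (abs_nonneg _) (by norm_num)
            rw [abs_of_pos h4x]; nlinarith [sq_nonneg x]
          have e3 : |x + y| * |deriv f y| ≤ 4 * C1 := by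
            refine mul_le_mul ?_ b3 (abs_nonneg _) (by norm_num)
            calc |x + y| ≤ |x| + |y| := abs_add_le _ _
              _ ≤ 4 := by linarith
          linarith
  have hGmeas : Measurable G :=
    (((continuous_dq hf x).measurable.const_mul x).add
      (hmeasD'.const_mul _)).sub
      ((measurable_const.add measurable_id).mul hcd.measurable)
  have hzero : ∫ y, G y ∂arcsineLaw = 0 := by
    rw [integral_arcsine]
    -- FTC on [-2,2] for h(y) = √(4-y²)/π · dq f x y
    set h : ℝ → ℝ := fun y => Real.sqrt (4 - y ^ 2) / π * dq f x y with hh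
    have hcont : ContinuousOn h (Icc (-2:ℝ) 2) :=
      (((Real.continuous_sqrt.comp (continuous_const.sub (continuous_pow 2))).div_const π).mul
        (continuous_dq hf x)).continuousOn
    have hderiv : ∀ y ∈ Ioo (-2:ℝ) 2, HasDerivAt h (wfn y * G y) y := by
      intro y hy
      have h4y : (0:ℝ) < 4 - y ^ 2 := by nlinarith [hy.1, hy.2]
      have hsy : Real.sqrt (4 - y ^ 2) ≠ 0 := by positivity
      have hsy' : (0:ℝ) < Real.sqrt (4 - y ^ 2) := by positivity
      have hss : Real.sqrt (4 - y ^ 2) * Real.sqrt (4 - y ^ 2) = 4 - y ^ 2 :=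
        Real.mul_self_sqrt h4y.le
      have hsq : HasDerivAt (fun z : ℝ => Real.sqrt (4 - z ^ 2))
          (-y / Real.sqrt (4 - y ^ 2)) y := by
        have hinner : HasDerivAt (fun z : ℝ => 4 - z ^ 2) (-(2 * y)) y := by
          simpa using ((hasDerivAt_pow 2 y).const_sub 4)
        have := (Real.hasDerivAt_sqrt (ne_of_gt h4y)).comp y hinner
        refine this.congr_deriv ?_
        ring
      have hmain := ((hsq.div_const π).mul (hasDerivAt_dq hf x y))
      refine hmain.congr_deriv ?_
      -- algebraic identity
      simp only [wfn, hG]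
      have hπ : π ≠ 0 := pi_ne_zero
      rcases eq_or_ne y x with hyx | hyx
      · subst hyx
        rw [dq'_diag, dq_diag]
        set s := Real.sqrt (4 - y ^ 2) with hsdef
        rw [← hss]
        field_simp
        ring
      · rw [dq'_of_ne f hyx, dq_of_ne f hyx]
        have hyx' : y - x ≠ 0 := sub_ne_zero.2 hyx
        have hxy' : x - y ≠ 0 := sub_ne_zero.2 (Ne.symm hyx)
        set s := Real.sqrt (4 - y ^ 2) with hsdef
        have h4 : (4 : ℝ) - x ^ 2 = s * s + (y ^ 2 - x ^ 2) := by linarith [hss]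
        rw [h4]
        field_simp
        ring
    have hint : IntervalIntegrable (fun y => wfn y * G y) volume (-2:ℝ) 2 := by
      rw [intervalIntegrable_iff_integrableOn_Ioc_of_le (by norm_num : (-2:ℝ) ≤ 2)]
      refine Integrable.mono' ((integrableOn_wfn).const_mul (2 * C1 + 4 * C2 + 4 * C1))
        (measurable_wfn.mul hGmeas).aestronglyMeasurable.restrict ?_
      refine (ae_restrict_iff' measurableSet_Ioc).2 (Filter.Eventually.of_forall fun y hy => ?_)
      rw [Real.norm_eq_abs, abs_mul, abs_of_nonneg (wfn_nonneg y), mul_comm]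
      exact mul_le_mul_of_nonneg_right
        (hGbound y ⟨hy.1.le, hy.2⟩) (wfn_nonneg y)
    have hftc := intervalIntegral.integral_eq_sub_of_hasDeriv_right_of_le
      (by norm_num : (-2:ℝ) ≤ 2) hcont
      (fun y hy => (hderiv y hy).hasDerivWithinAt) hint
    have hend : h 2 - h (-2) = 0 := by
      rw [hh]
      norm_num
    rw [hend] at hftc
    rw [← integral_Ioc_eq_integral_Ioo, ← intervalIntegral.integral_of_le (by norm_num : (-2:ℝ) ≤ 2)]
    exact hftc
  -- split ∫ G into the pieces
  have hsplit : ∫ y, G y ∂arcsineLaw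
      = x * V + (4 - x ^ 2) * (∫ y, dq' f x y ∂arcsineLaw)
        - (x * (∫ y, deriv f y ∂arcsineLaw) + ∫ y, y * deriv f y ∂arcsineLaw) := by
    have hA : Integrable (fun y => x * dq f x y + (4 - x ^ 2) * dq' f x y) arcsineLaw :=
      (hVint.const_mul x).add (hD'int.const_mul _)
    have hB : Integrable (fun y => x * deriv f y + y * deriv f y) arcsineLaw :=
      (hI2int.const_mul x).add hI1int
    calc ∫ y, G y ∂arcsineLaw
        = ∫ y, ((x * dq f x y + (4 - x ^ 2) * dq' f x y)
            - (x * deriv f y + y * deriv f y)) ∂arcsineLaw := by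
          refine integral_congr_ae (Filter.Eventually.of_forall fun y => ?_)
          rw [hG]; ring
      _ = x * V + (4 - x ^ 2) * (∫ y, dq' f x y ∂arcsineLaw)
            - (x * (∫ y, deriv f y ∂arcsineLaw) + ∫ y, y * deriv f y ∂arcsineLaw) := by
          rw [integral_sub hA hB, integral_add (hVint.const_mul x) (hD'int.const_mul _),
            integral_add (hI2int.const_mul x) hI1int,
            integral_const_mul, integral_const_mul, integral_const_mul]
  -- relation between the two dq' integrals
  have hDrel : ∫ y, dq' f x y ∂arcsineLaw
      = (∫ y, (deriv f x - deriv f y) / (x - y) ∂arcsineLaw) - D := by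
    rw [hD, ← integral_sub hI3int hDint]
    refine integral_congr_ae ?_
    filter_upwards [ae_ne x] with y hy
    rw [dq'_of_ne f hy, dq'_of_ne f (Ne.symm hy), dq_symm f y x, dq_of_ne f hy]
    have hyx' : y - x ≠ 0 := sub_ne_zero.2 hy
    have hxy' : x - y ≠ 0 := sub_ne_zero.2 (Ne.symm hy)
    field_simp
    ring
  -- assemble
  rw [hprod.deriv, calN]
  have hfin : (∫ y, y * deriv f y ∂arcsineLaw) + x * (∫ y, deriv f y ∂arcsineLaw)
      - (4 - x ^ 2) * (∫ y, (deriv f x - deriv f y) / (x - y) ∂arcsineLaw)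
      = x * V - (4 - x ^ 2) * D := by
    rw [hsplit, hDrel] at hzero
    linarith [hzero]
  rw [hfin]
  have hss : Real.sqrt (4 - x ^ 2) * Real.sqrt (4 - x ^ 2) = 4 - x ^ 2 :=
    Real.mul_self_sqrt h4x.le
  field_simp
  linear_combination D * hss
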